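/- Let the test statistic under hypothesis H₀ and H₁ be Gaussian with means μ₀, μ₁ and variances v₀, v₁ respectively. Then the area under the ROC curve, defined as A = −∫_{−∞}^{∞} P_D(λ)·(d P_F(λ)/dλ) dλ with P_F(λ) = Q((λ−μ₀)/√v₀) and P_D(λ) = Q((λ−μ₁)/√v₁), equals Q(a/√(b²+1)) where a = (μ₀ − μ₁)/√v₁ and b = √(v₀/v₁). -/

import Mathlib

open MeasureTheory Real

/-- The Gaussian tail function `Q(x) = (1/√(2π)) ∫_x^∞ exp(−t²/2) dt`. -/
noncomputable def gaussQ (x : ℝ) : ℝ :=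
  (Real.sqrt (2 * Real.pi))⁻¹ * ∫ t in Set.Ioi x, Real.exp (-t ^ 2 / 2)

section Aux
open Set


lemma int_phi : Integrable (fun t : ℝ => rexp (-t ^ 2 / 2)) := by
  have h := integrable_exp_neg_mul_sq (b := 1/2) (by norm_num)
  apply h.congr
  filter_upwards with x
  ring_nf

lemma integral_phi : ∫ t : ℝ, rexp (-t ^ 2 / 2) = Real.sqrt (2 * π) := by
  have h := integral_gaussian (1/2)
  simp_rw [show ∀ x : ℝ, -(1/2 : ℝ) * x ^ 2 = -x ^ 2 / 2 from fun x => by ring] at h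
  rw [h]
  congr 1
  ring

lemma comp_add_right_Ioi (g : ℝ → ℝ) (a c : ℝ) :
    ∫ x in Ioi a, g (x + c) = ∫ x in Ioi (a + c), g x := by
  rw [← integral_indicator measurableSet_Ioi, ← integral_indicator measurableSet_Ioi,
    ← integral_add_right_eq_self (Set.indicator (Ioi (a + c)) g) c]
  congr 1 with x
  by_cases hx : a < x
  · simp [Set.indicator_apply, hx, add_lt_add_iff_right]
  · simp [Set.indicator_apply, hx, add_lt_add_iff_right]

lemma int_phi_shift (z : ℝ) : Integrable (fun t : ℝ => rexp (-(t + z) ^ 2 / 2)) :=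
  int_phi.comp_add_right z

lemma gaussQ_eq (z : ℝ) :
    gaussQ z = (Real.sqrt (2 * π))⁻¹ * ∫ u in Ioi 0, rexp (-(u + z) ^ 2 / 2) := by
  unfold gaussQ
  congr 1
  conv_rhs => rw [comp_add_right_Ioi (fun t => rexp (-t ^ 2 / 2)) 0 z]
  rw [zero_add]

lemma phi_cont : Continuous (fun t : ℝ => rexp (-t ^ 2 / 2)) := by fun_prop

lemma gaussQ_hasDeriv (x : ℝ) :
    HasDerivAt gaussQ (-((Real.sqrt (2 * π))⁻¹ * rexp (-x ^ 2 / 2))) x := by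
  set φ : ℝ → ℝ := fun t => rexp (-t ^ 2 / 2) with hφ
  have hint : ∀ y : ℝ, (∫ t in Ioi y, φ t) =
      ((∫ t, φ t) - ∫ t in Iic (0:ℝ), φ t) - ∫ t in (0:ℝ)..y, φ t := by
    intro y
    have h1 : (∫ t in Iic y, φ t) + ∫ t in Ioi y, φ t = ∫ t, φ t :=
      intervalIntegral.integral_Iic_add_Ioi int_phi.integrableOn int_phi.integrableOn
    have h2 : (∫ t in Iic y, φ t) - ∫ t in Iic (0:ℝ), φ t = ∫ t in (0:ℝ)..y, φ t :=
      intervalIntegral.integral_Iic_sub_Iic int_phi.integrableOn int_phi.integrableOn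
    linarith
  have heq : gaussQ = fun y =>
      (Real.sqrt (2 * π))⁻¹ * (((∫ t, φ t) - ∫ t in Iic (0:ℝ), φ t) - ∫ t in (0:ℝ)..y, φ t) := by
    funext y; rw [gaussQ, hint y]
  rw [heq]
  have hd : HasDerivAt (fun y => ∫ t in (0:ℝ)..y, φ t) (φ x) x :=
    intervalIntegral.integral_hasDerivAt_right (int_phi.intervalIntegrable)
      (phi_cont.stronglyMeasurable.stronglyMeasurableAtFilter)
      phi_cont.continuousAt
  have := ((hasDerivAt_const x ((∫ t, φ t) - ∫ t in Iic (0:ℝ), φ t)).sub hd).const_mul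
    (Real.sqrt (2 * π))⁻¹
  refine this.congr_deriv ?_
  ring

section Key
variable (μ₀ μ₁ c d : ℝ)

/-- the 2-variable integrand -/
noncomputable def F (lam u : ℝ) : ℝ :=
  rexp (-(u + (lam - μ₁) / d) ^ 2 / 2 - ((lam - μ₀) / c) ^ 2 / 2)

lemma step1 (hc : 0 < c) (lam : ℝ) :
    gaussQ ((lam - μ₁) / d) *
      ((Real.sqrt (2 * π))⁻¹ * c⁻¹ * rexp (-((lam - μ₀) / c) ^ 2 / 2)) =
    ((2 * π)⁻¹ * c⁻¹) * ∫ u in Ioi 0, F μ₀ μ₁ c d lam u := by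
  have h1 : ∫ u in Ioi (0:ℝ), F μ₀ μ₁ c d lam u =
      (∫ u in Ioi (0:ℝ), rexp (-(u + (lam - μ₁) / d) ^ 2 / 2)) *
        rexp (-((lam - μ₀) / c) ^ 2 / 2) := by
    rw [← integral_mul_const]
    congr 1 with u
    rw [F, ← Real.exp_add]
    congr 1
    ring
  rw [gaussQ_eq, h1]
  generalize hq : Real.sqrt (2 * π) = q
  have hq2 : q * q = 2 * π := by rw [← hq]; exact Real.mul_self_sqrt (by positivity)
  rw [← hq2]
  ring

lemma inner_eq (hc : 0 < c) (hd : 0 < d) (u : ℝ) :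
    ∫ lam : ℝ, F μ₀ μ₁ c d lam u =
      Real.sqrt (π / ((c ^ 2 + d ^ 2) / (c ^ 2 * d ^ 2) / 2)) *
        rexp (-(d * u + (μ₀ - μ₁)) ^ 2 / (2 * (c ^ 2 + d ^ 2))) := by
  have hc' : c ≠ 0 := ne_of_gt hc
  have hd' : d ≠ 0 := ne_of_gt hd
  have hS : c ^ 2 + d ^ 2 ≠ 0 := by positivity
  set k2 : ℝ := (c ^ 2 + d ^ 2) / (c ^ 2 * d ^ 2) / 2 with hk2
  set m : ℝ := (c ^ 2 * (μ₁ - d * u) + d ^ 2 * μ₀) / (c ^ 2 + d ^ 2) with hm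
  have hiden : ∀ lam : ℝ, F μ₀ μ₁ c d lam u =
      rexp (-k2 * (lam - m) ^ 2) *
        rexp (-(d * u + (μ₀ - μ₁)) ^ 2 / (2 * (c ^ 2 + d ^ 2))) := by
    intro lam
    rw [F, ← Real.exp_add]
    congr 1
    rw [hk2, hm]
    field_simp
    ring
  simp_rw [hiden]
  rw [integral_mul_const]
  congr 1
  rw [show (∫ lam : ℝ, rexp (-k2 * (lam - m) ^ 2)) = ∫ x : ℝ, rexp (-k2 * x ^ 2) from
    integral_sub_right_eq_self (fun x : ℝ => rexp (-k2 * x ^ 2)) m]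
  exact integral_gaussian k2

lemma F_cont : Continuous (Function.uncurry (F μ₀ μ₁ c d)) := by
  unfold Function.uncurry F
  fun_prop

lemma F_nonneg (lam u : ℝ) : 0 ≤ F μ₀ μ₁ c d lam u := (Real.exp_pos _).le

lemma F_int_u (lam : ℝ) : Integrable (F μ₀ μ₁ c d lam) (volume.restrict (Ioi 0)) := by
  have h : Integrable (fun u : ℝ => rexp (-(u + (lam - μ₁) / d) ^ 2 / 2) *
      rexp (-((lam - μ₀) / c) ^ 2 / 2)) := (int_phi_shift _).mul_const _
  refine (h.congr (Filter.Eventually.of_forall fun u => ?_)).restrict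
  show rexp (-(u + (lam - μ₁) / d) ^ 2 / 2) * rexp (-((lam - μ₀) / c) ^ 2 / 2) =
    F μ₀ μ₁ c d lam u
  rw [F, ← Real.exp_add]
  congr 1
  ring

lemma int_gauss_affine (hc : 0 < c) (μ : ℝ) :
    Integrable (fun lam : ℝ => rexp (-((lam - μ) / c) ^ 2 / 2)) := by
  have hc' : c ≠ 0 := ne_of_gt hc
  have h := (integrable_exp_neg_mul_sq (b := 1 / (2 * c ^ 2)) (by positivity)).comp_sub_right μ
  refine h.congr (Filter.Eventually.of_forall fun lam => ?_)
  show rexp (-(1 / (2 * c ^ 2)) * (lam - μ) ^ 2) = rexp (-((lam - μ) / c) ^ 2 / 2)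
  rw [Real.exp_eq_exp, div_pow]
  ring

lemma F_marg_eq (lam : ℝ) : ∫ u in Ioi (0:ℝ), F μ₀ μ₁ c d lam u =
    (∫ u in Ioi (0:ℝ), rexp (-(u + (lam - μ₁) / d) ^ 2 / 2)) *
      rexp (-((lam - μ₀) / c) ^ 2 / 2) := by
  rw [← integral_mul_const]
  congr 1 with u
  rw [F, ← Real.exp_add]
  congr 1
  ring

lemma F_swap_integrable (hc : 0 < c) :
    Integrable (Function.uncurry (F μ₀ μ₁ c d)) (volume.prod (volume.restrict (Ioi 0))) := by
  refine (integrable_prod_iff (F_cont μ₀ μ₁ c d).aestronglyMeasurable).2 ⟨?_, ?_⟩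
  · exact Filter.Eventually.of_forall fun lam => F_int_u μ₀ μ₁ c d lam
  · have hg : Integrable (fun lam : ℝ => Real.sqrt (2 * π) *
        rexp (-((lam - μ₀) / c) ^ 2 / 2)) := (int_gauss_affine c hc μ₀).const_mul _
    refine hg.mono
      ((F_cont μ₀ μ₁ c d).aestronglyMeasurable.norm.integral_prod_right')
      (Filter.Eventually.of_forall fun lam => ?_)
    have h0 : ∀ u, ‖F μ₀ μ₁ c d lam u‖ = F μ₀ μ₁ c d lam u :=
      fun u => Real.norm_of_nonneg (F_nonneg μ₀ μ₁ c d lam u)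
    rw [Real.norm_of_nonneg (integral_nonneg fun u => norm_nonneg _),
      Real.norm_of_nonneg (by positivity)]
    calc (∫ u in Ioi (0:ℝ), ‖F μ₀ μ₁ c d lam u‖) = ∫ u in Ioi (0:ℝ), F μ₀ μ₁ c d lam u := by
          simp_rw [h0]
      _ = (∫ u in Ioi (0:ℝ), rexp (-(u + (lam - μ₁) / d) ^ 2 / 2)) *
            rexp (-((lam - μ₀) / c) ^ 2 / 2) := F_marg_eq μ₀ μ₁ c d lam
      _ ≤ (∫ u : ℝ, rexp (-(u + (lam - μ₁) / d) ^ 2 / 2)) *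
            rexp (-((lam - μ₀) / c) ^ 2 / 2) :=
          mul_le_mul_of_nonneg_right
            (setIntegral_le_integral (int_phi_shift _)
              (Filter.Eventually.of_forall fun u => (Real.exp_pos _).le))
            (Real.exp_pos _).le
      _ = Real.sqrt (2 * π) * rexp (-((lam - μ₀) / c) ^ 2 / 2) := by
          rw [integral_add_right_eq_self (fun t : ℝ => rexp (-t ^ 2 / 2)) ((lam - μ₁) / d),
            integral_phi]

lemma key (hc : 0 < c) (hd : 0 < d) :
    (∫ lam : ℝ, gaussQ ((lam - μ₁) / d) *
      ((Real.sqrt (2 * π))⁻¹ * c⁻¹ * rexp (-((lam - μ₀) / c) ^ 2 / 2))) =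
    gaussQ ((μ₀ - μ₁) / Real.sqrt (c ^ 2 + d ^ 2)) := by
  have hS : (0:ℝ) < c ^ 2 + d ^ 2 := by positivity
  have hs0 : 0 < Real.sqrt (c ^ 2 + d ^ 2) := Real.sqrt_pos.2 hS
  have hs2 : Real.sqrt (c ^ 2 + d ^ 2) ^ 2 = c ^ 2 + d ^ 2 := Real.sq_sqrt hS.le
  have hsub1 : ∫ u in Ioi (0:ℝ), rexp (-(d * u + (μ₀ - μ₁)) ^ 2 / (2 * (c ^ 2 + d ^ 2))) =
      d⁻¹ * ∫ y in Ioi (0:ℝ), rexp (-(y + (μ₀ - μ₁)) ^ 2 / (2 * (c ^ 2 + d ^ 2))) := by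
    have h := integral_comp_mul_left_Ioi
      (fun y => rexp (-(y + (μ₀ - μ₁)) ^ 2 / (2 * (c ^ 2 + d ^ 2)))) 0 hd
    simp only [mul_zero, smul_eq_mul] at h
    exact h
  have hsub2 : ∫ y in Ioi (0:ℝ), rexp (-(y + (μ₀ - μ₁)) ^ 2 / (2 * (c ^ 2 + d ^ 2))) =
      ∫ y in Ioi (μ₀ - μ₁), rexp (-y ^ 2 / (2 * (c ^ 2 + d ^ 2))) := by
    have h := comp_add_right_Ioi
      (fun y => rexp (-y ^ 2 / (2 * (c ^ 2 + d ^ 2)))) 0 (μ₀ - μ₁)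
    rw [zero_add] at h
    exact h
  have hsub3 : ∫ y in Ioi (μ₀ - μ₁), rexp (-y ^ 2 / (2 * (c ^ 2 + d ^ 2))) =
      Real.sqrt (c ^ 2 + d ^ 2) *
        ∫ x in Ioi ((μ₀ - μ₁) / Real.sqrt (c ^ 2 + d ^ 2)), rexp (-x ^ 2 / 2) := by
    have h := integral_comp_mul_left_Ioi
      (fun y => rexp (-y ^ 2 / (2 * (c ^ 2 + d ^ 2))))
      ((μ₀ - μ₁) / Real.sqrt (c ^ 2 + d ^ 2)) hs0
    rw [mul_div_cancel₀ _ (ne_of_gt hs0), smul_eq_mul] at h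
    have h2 : ∀ x : ℝ, rexp (-(Real.sqrt (c ^ 2 + d ^ 2) * x) ^ 2 / (2 * (c ^ 2 + d ^ 2))) =
        rexp (-x ^ 2 / 2) := fun x => by
      congr 1
      rw [mul_pow, hs2]
      field_simp
    simp_rw [h2] at h
    rw [h, ← mul_assoc, mul_inv_cancel₀ (ne_of_gt hs0), one_mul]
  have hlast : ∫ x in Ioi ((μ₀ - μ₁) / Real.sqrt (c ^ 2 + d ^ 2)), rexp (-x ^ 2 / 2) =
      Real.sqrt (2 * π) * gaussQ ((μ₀ - μ₁) / Real.sqrt (c ^ 2 + d ^ 2)) := by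
    rw [gaussQ, ← mul_assoc, mul_inv_cancel₀ (by positivity), one_mul]
  calc (∫ lam : ℝ, gaussQ ((lam - μ₁) / d) *
        ((Real.sqrt (2 * π))⁻¹ * c⁻¹ * rexp (-((lam - μ₀) / c) ^ 2 / 2)))
      = ∫ lam : ℝ, ((2 * π)⁻¹ * c⁻¹) * ∫ u in Ioi (0:ℝ), F μ₀ μ₁ c d lam u := by
        simp_rw [step1 μ₀ μ₁ c d hc]
    _ = ((2 * π)⁻¹ * c⁻¹) * ∫ lam : ℝ, ∫ u in Ioi (0:ℝ), F μ₀ μ₁ c d lam u :=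
        integral_const_mul _ _
    _ = ((2 * π)⁻¹ * c⁻¹) * ∫ u in Ioi (0:ℝ), ∫ lam : ℝ, F μ₀ μ₁ c d lam u := by
        rw [integral_integral_swap (F_swap_integrable μ₀ μ₁ c d hc)]
    _ = ((2 * π)⁻¹ * c⁻¹) * ∫ u in Ioi (0:ℝ),
          Real.sqrt (π / ((c ^ 2 + d ^ 2) / (c ^ 2 * d ^ 2) / 2)) *
            rexp (-(d * u + (μ₀ - μ₁)) ^ 2 / (2 * (c ^ 2 + d ^ 2))) := by
        simp_rw [inner_eq μ₀ μ₁ c d hc hd]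
    _ = ((2 * π)⁻¹ * c⁻¹) * (Real.sqrt (π / ((c ^ 2 + d ^ 2) / (c ^ 2 * d ^ 2) / 2)) *
          ∫ u in Ioi (0:ℝ), rexp (-(d * u + (μ₀ - μ₁)) ^ 2 / (2 * (c ^ 2 + d ^ 2)))) :=
        by rw [integral_const_mul]
    _ = gaussQ ((μ₀ - μ₁) / Real.sqrt (c ^ 2 + d ^ 2)) := by
        rw [hsub1, hsub2, hsub3, hlast]
        have hsqrt : Real.sqrt (π / ((c ^ 2 + d ^ 2) / (c ^ 2 * d ^ 2) / 2)) =
            Real.sqrt (2 * π) * c * d / Real.sqrt (c ^ 2 + d ^ 2) := by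
          rw [show π / ((c ^ 2 + d ^ 2) / (c ^ 2 * d ^ 2) / 2) =
              (Real.sqrt (2 * π) * c * d / Real.sqrt (c ^ 2 + d ^ 2)) ^ 2 by
            rw [div_pow, mul_pow, mul_pow, Real.sq_sqrt (by positivity : (0:ℝ) ≤ 2 * π), hs2]
            field_simp]
          exact Real.sqrt_sq (by positivity)
        rw [hsqrt]
        have hq0 : Real.sqrt (2 * π) ≠ 0 := by positivity
        have hq2 : Real.sqrt (2 * π) * Real.sqrt (2 * π) = 2 * π :=
          Real.mul_self_sqrt (by positivity)
        field_simp
        have e2 : Real.sqrt 2 * Real.sqrt π * (Real.sqrt 2 * Real.sqrt π) = 2 * π := by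
          rw [mul_mul_mul_comm, Real.mul_self_sqrt (by norm_num : (0:ℝ) ≤ 2),
            Real.mul_self_sqrt Real.pi_pos.le]
        linear_combination (gaussQ ((μ₀ - μ₁) / Real.sqrt (c ^ 2 + d ^ 2))) * hq2
end Key

end Aux

/-- For Gaussian test statistics with means `μ₀, μ₁` and variances `v₀, v₁`,
the area under the ROC curve
`A = −∫ P_D(λ) (d P_F(λ)/dλ) dλ`, with `P_F(λ) = Q((λ−μ₀)/√v₀)` and
`P_D(λ) = Q((λ−μ₁)/√v₁)`, equals `Q(a/√(b²+1))`, where `a = (μ₀−μ₁)/√v₁`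
and `b = √(v₀/v₁)`. -/
theorem auc_of_roc (μ₀ μ₁ v₀ v₁ : ℝ) (hv₀ : 0 < v₀) (hv₁ : 0 < v₁)
    (P_F P_D : ℝ → ℝ)
    (hPF : ∀ lam, P_F lam = gaussQ ((lam - μ₀) / Real.sqrt v₀))
    (hPD : ∀ lam, P_D lam = gaussQ ((lam - μ₁) / Real.sqrt v₁))
    (A a b : ℝ)
    (hA : A = -∫ lam : ℝ, P_D lam * deriv P_F lam)
    (ha : a = (μ₀ - μ₁) / Real.sqrt v₁)
    (hb : b = Real.sqrt (v₀ / v₁)) :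
    A = gaussQ (a / Real.sqrt (b ^ 2 + 1)) := by
  have hc : 0 < Real.sqrt v₀ := Real.sqrt_pos.2 hv₀
  have hd : 0 < Real.sqrt v₁ := Real.sqrt_pos.2 hv₁
  have hPFd : ∀ lam : ℝ, HasDerivAt P_F
      (-((Real.sqrt (2 * π))⁻¹ * rexp (-((lam - μ₀) / Real.sqrt v₀) ^ 2 / 2)) *
        (Real.sqrt v₀)⁻¹) lam := by
    intro lam
    have h1 : HasDerivAt (fun l : ℝ => (l - μ₀) / Real.sqrt v₀) (Real.sqrt v₀)⁻¹ lam := by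
      simpa [one_div] using ((hasDerivAt_id lam).sub_const μ₀).div_const (Real.sqrt v₀)
    have h2 := (gaussQ_hasDeriv ((lam - μ₀) / Real.sqrt v₀)).comp lam h1
    have hPF' : P_F = gaussQ ∘ fun l : ℝ => (l - μ₀) / Real.sqrt v₀ := funext hPF
    rw [hPF']
    exact h2
  have hint : ∀ lam : ℝ, P_D lam * deriv P_F lam =
      -(gaussQ ((lam - μ₁) / Real.sqrt v₁) * ((Real.sqrt (2 * π))⁻¹ * (Real.sqrt v₀)⁻¹ *
        rexp (-((lam - μ₀) / Real.sqrt v₀) ^ 2 / 2))) := by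
    intro lam
    rw [hPD, (hPFd lam).deriv]
    ring
  have harg : a / Real.sqrt (b ^ 2 + 1) = (μ₀ - μ₁) / Real.sqrt (v₀ + v₁) := by
    have hsv1 : Real.sqrt v₁ ≠ 0 := ne_of_gt hd
    have hsS : Real.sqrt (v₀ + v₁) ≠ 0 := by positivity
    rw [ha, hb, Real.sq_sqrt (by positivity : (0:ℝ) ≤ v₀ / v₁),
      show v₀ / v₁ + 1 = (v₀ + v₁) / v₁ by field_simp,
      Real.sqrt_div (by positivity : (0:ℝ) ≤ v₀ + v₁)]
    field_simp
  rw [hA]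
  simp_rw [hint]
  rw [integral_neg, neg_neg,
    key μ₀ μ₁ (Real.sqrt v₀) (Real.sqrt v₁) hc hd]
  congr 1
  rw [Real.sq_sqrt hv₀.le, Real.sq_sqrt hv₁.le, harg]
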